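/- arXiv:2108.00479 — 6 statements merged into one kernel-verified Lean document; each statement's English description precedes it below -/
import Mathlib

section
/- Let ℓ ≥ 1 and k ≥ 1 be integers and let D be a family of ℓ-element sets containing no sunflower of size k+1. Then |D| ≤ ℓ! · k^ℓ. -/
open Finset

/-- A family of finite sets is intersecting if any two members meet. -/
def Intersecting (F : Finset (Finset ℕ)) : Prop :=
  ∀ A ∈ F, ∀ B ∈ F, (A ∩ B).Nonempty

/-- `T` is a transversal of `F` inside `{1,…,n}` of size at most `k`. -/
def Transversal (n k : ℕ) (F : Finset (Finset ℕ)) (T : Finset ℕ) : Prop :=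
  T ⊆ Finset.Icc 1 n ∧ T.card ≤ k ∧ ∀ A ∈ F, (T ∩ A).Nonempty

/-- `B` is an inclusion-minimal transversal of `F`. -/
def MinTrans (n k : ℕ) (F : Finset (Finset ℕ)) (B : Finset ℕ) : Prop :=
  Transversal n k F B ∧ ∀ T, Transversal n k F T → T ⊆ B → T = B

/-- `F` is a saturated intersecting family of `k`-subsets of `{1,…,n}`. -/
def Saturated (n k : ℕ) (F : Finset (Finset ℕ)) : Prop :=
  Intersecting F ∧
    ∀ G ∈ (Finset.Icc 1 n).powersetCard k, G ∉ F → ¬ Intersecting (insert G F)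

/-- The family of distinct pairwise intersections of distinct members of `F`. -/
def interFam (F : Finset (Finset ℕ)) : Finset (Finset ℕ) :=
  ((F ×ˢ F).filter fun p => p.1 ≠ p.2).image fun p => p.1 ∩ p.2

lemma sun_aux (k : ℕ) (hk : 1 ≤ k) :
    ∀ ℓ (D : Finset (Finset ℕ)), (∀ A ∈ D, A.card = ℓ) →
    (¬ ∃ (S : Finset (Finset ℕ)) (C : Finset ℕ), S ⊆ D ∧ S.card = k + 1 ∧
        ∀ B₁ ∈ S, ∀ B₂ ∈ S, B₁ ≠ B₂ → B₁ ∩ B₂ = C) →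
    D.card ≤ Nat.factorial ℓ * k ^ ℓ := by
  intro ℓ
  induction ℓ with
  | zero =>
    intro D hD _
    simp only [Nat.factorial_zero, pow_zero, mul_one]
    apply Finset.card_le_one.mpr
    intro a ha b hb
    have h1 := Finset.card_eq_zero.mp (hD a ha)
    have h2 := Finset.card_eq_zero.mp (hD b hb)
    rw [h1, h2]
  | succ n ih =>
    intro D hD hsun
    -- family of pairwise disjoint subfamilies
    set 𝒮 := D.powerset.filter (fun S => ∀ A ∈ S, ∀ B ∈ S, A ≠ B → A ∩ B = ∅) with h𝒮
    have hne : 𝒮.Nonempty := ⟨∅, by simp [h𝒮]⟩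
    obtain ⟨S, hS, hmax⟩ := Finset.exists_max_image 𝒮 Finset.card hne
    simp only [h𝒮, Finset.mem_filter, Finset.mem_powerset] at hS
    obtain ⟨hSD, hSdisj⟩ := hS
    -- S has at most k elements
    have hScard : S.card ≤ k := by
      by_contra h
      push_neg at h
      obtain ⟨T, hTS, hTcard⟩ := Finset.exists_subset_card_eq (by omega : k + 1 ≤ S.card)
      exact hsun ⟨T, ∅, hTS.trans hSD, hTcard,
        fun B₁ h1 B₂ h2 hne => hSdisj B₁ (hTS h1) B₂ (hTS h2) hne⟩
    set Y := S.biUnion id with hY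
    -- every A ∈ D meets Y
    have hmeet : ∀ A ∈ D, (A ∩ Y).Nonempty := by
      intro A hA
      by_contra hcon
      rw [Finset.not_nonempty_iff_eq_empty] at hcon
      have hAne : A.Nonempty := by
        rw [← Finset.card_pos, hD A hA]; omega
      have hAS : A ∉ S := by
        intro hmem
        have : A ⊆ Y := fun x hx => Finset.mem_biUnion.mpr ⟨A, hmem, hx⟩
        obtain ⟨x, hx⟩ := hAne
        have : x ∈ A ∩ Y := Finset.mem_inter.mpr ⟨hx, this hx⟩
        simp [hcon] at this
      have hins : insert A S ∈ 𝒮 := by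
        simp only [h𝒮, Finset.mem_filter, Finset.mem_powerset]
        constructor
        · exact Finset.insert_subset hA hSD
        · have hdisjA : ∀ B ∈ S, A ∩ B = ∅ := by
            intro B hB
            have hsub : A ∩ B ⊆ A ∩ Y :=
              Finset.inter_subset_inter (Finset.Subset.refl _)
                (fun x hx => Finset.mem_biUnion.mpr ⟨B, hB, (by exact hx : x ∈ id B)⟩)
            rw [hcon] at hsub
            exact Finset.subset_empty.mp hsub
          intro B₁ h1 B₂ h2 hne12
          rcases Finset.mem_insert.mp h1 with h1' | h1' <;>
            rcases Finset.mem_insert.mp h2 with h2' | h2'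
          · exact absurd (h1'.trans h2'.symm) hne12
          · rw [h1']; exact hdisjA B₂ h2'
          · rw [h2', Finset.inter_comm]; exact hdisjA B₁ h1'
          · exact hSdisj B₁ h1' B₂ h2' hne12
      have := hmax _ hins
      rw [Finset.card_insert_of_notMem hAS] at this
      omega
    -- |Y| ≤ (n+1) * k
    have hYcard : Y.card ≤ (n + 1) * k := by
      calc Y.card ≤ ∑ A ∈ S, (id A).card := Finset.card_biUnion_le
        _ = ∑ A ∈ S, (n + 1) := Finset.sum_congr rfl (fun A hA => hD A (hSD hA))
        _ = S.card * (n + 1) := by rw [Finset.sum_const, smul_eq_mul]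
        _ ≤ k * (n + 1) := Nat.mul_le_mul_right _ hScard
        _ = (n + 1) * k := Nat.mul_comm _ _
    -- D ⊆ ⋃_{y ∈ Y} {A ∈ D | y ∈ A}
    have hcover : D ⊆ Y.biUnion (fun y => D.filter (fun A => y ∈ A)) := by
      intro A hA
      obtain ⟨y, hy⟩ := hmeet A hA
      rw [Finset.mem_inter] at hy
      exact Finset.mem_biUnion.mpr ⟨y, hy.2, Finset.mem_filter.mpr ⟨hA, hy.1⟩⟩
    -- each slice is small
    have hslice : ∀ y ∈ Y, (D.filter (fun A => y ∈ A)).card ≤ Nat.factorial n * k ^ n := by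
      intro y _
      set Dy := (D.filter (fun A => y ∈ A)).image (fun A => A.erase y) with hDy
      have hinj : Set.InjOn (fun A : Finset ℕ => A.erase y) ↑(D.filter (fun A => y ∈ A)) := by
        intro A hA B hB hEq
        simp only [Finset.coe_filter, Set.mem_setOf_eq] at hA hB
        rw [← Finset.insert_erase hA.2, ← Finset.insert_erase hB.2]
        simp only at hEq
        rw [hEq]
      have hcardeq : (D.filter (fun A => y ∈ A)).card = Dy.card :=
        (Finset.card_image_of_injOn hinj).symm
      rw [hcardeq]
      apply ih
      · intro B hB
        obtain ⟨A, hA, rfl⟩ := Finset.mem_image.mp hB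
        simp only [Finset.mem_filter] at hA
        rw [Finset.card_erase_of_mem hA.2, hD A hA.1]
        omega
      · rintro ⟨S', C, hS'Dy, hS'card, hS'sun⟩
        apply hsun
        refine ⟨S'.image (insert y), insert y C, ?_, ?_, ?_⟩
        · intro A hA
          obtain ⟨B, hB, rfl⟩ := Finset.mem_image.mp hA
          obtain ⟨A', hA', rfl⟩ := Finset.mem_image.mp (hS'Dy hB)
          simp only [Finset.mem_filter] at hA'
          rw [Finset.insert_erase hA'.2]
          exact hA'.1
        · rw [Finset.card_image_of_injOn, hS'card]
          intro B₁ h1 B₂ h2 hEq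
          have hy1 : y ∉ B₁ := by
            obtain ⟨A', _, rfl⟩ := Finset.mem_image.mp (hS'Dy h1)
            exact Finset.notMem_erase _ _
          have hy2 : y ∉ B₂ := by
            obtain ⟨A', _, rfl⟩ := Finset.mem_image.mp (hS'Dy h2)
            exact Finset.notMem_erase _ _
          rw [← Finset.erase_insert hy1, ← Finset.erase_insert hy2, hEq]
        · intro B₁ h1 B₂ h2 hne12
          obtain ⟨B₁', hB1, rfl⟩ := Finset.mem_image.mp h1
          obtain ⟨B₂', hB2, rfl⟩ := Finset.mem_image.mp h2
          have hne' : B₁' ≠ B₂' := fun h => hne12 (by rw [h])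
          rw [← Finset.insert_inter_distrib, hS'sun B₁' hB1 B₂' hB2 hne']
    calc D.card ≤ (Y.biUnion (fun y => D.filter (fun A => y ∈ A))).card :=
          Finset.card_le_card hcover
      _ ≤ ∑ y ∈ Y, (D.filter (fun A => y ∈ A)).card := Finset.card_biUnion_le
      _ ≤ ∑ y ∈ Y, Nat.factorial n * k ^ n := Finset.sum_le_sum hslice
      _ = Y.card * (Nat.factorial n * k ^ n) := by rw [Finset.sum_const, smul_eq_mul]
      _ ≤ ((n + 1) * k) * (Nat.factorial n * k ^ n) :=
          Nat.mul_le_mul_right _ hYcard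
      _ = Nat.factorial (n + 1) * k ^ (n + 1) := by
          rw [Nat.factorial_succ, pow_succ]; ring

theorem stmt_4 (ℓ k : ℕ) (hℓ : 1 ≤ ℓ) (hk : 1 ≤ k) (D : Finset (Finset ℕ))
    (hD : ∀ A ∈ D, A.card = ℓ)
    (hsun : ¬ ∃ (S : Finset (Finset ℕ)) (C : Finset ℕ), S ⊆ D ∧ S.card = k + 1 ∧
        ∀ B₁ ∈ S, ∀ B₂ ∈ S, B₁ ≠ B₂ → B₁ ∩ B₂ = C) :
    D.card ≤ Nat.factorial ℓ * k ^ ℓ := by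
  exact sun_aux k hk ℓ D hD hsun
end

section
/- Let n > 2k ≥ 4, let X = {1,...,n}, and let A be the family of k-subsets A of X with |A ∩ {1,2,3}| ≥ 2. Then the number of distinct intersections A ∩ A' over pairs of distinct members A, A' of A equals 3·Σ_{i=0}^{k-2} C(n-3, i) + 3·Σ_{i=0}^{k-3} C(n-3, i) + Σ_{i=0}^{k-4} C(n-3, i). -/
open Finset

lemma count_small (s : Finset ℕ) (k : ℕ) :
    ((s.powerset).filter (fun R => R.card < k)).card = ∑ i ∈ Finset.range k, s.card.choose i := by
  have h : (s.powerset).filter (fun R => R.card < k)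
      = (Finset.range k).biUnion (fun i => s.powersetCard i) := by
    ext R
    simp only [mem_filter, mem_powerset, mem_biUnion, mem_range, mem_powersetCard]
    constructor
    · rintro ⟨h1, h2⟩; exact ⟨R.card, h2, h1, rfl⟩
    · rintro ⟨i, hi, h1, rfl⟩; exact ⟨h1, hi⟩
  rw [h, Finset.card_biUnion]
  · simp [Finset.card_powersetCard]
  · intro i _ j _ hij
    rw [Function.onFun, Finset.disjoint_left]
    intro R hR hR2
    rw [mem_powersetCard] at hR hR2
    omega

lemma choose_id (m j : ℕ) : (m+3).choose (j+3)
    = m.choose (j+3) + 3*(m.choose (j+2)) + 3*(m.choose (j+1)) + m.choose j := by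
  have h1 : (m+3).choose (j+3) = (m+2).choose (j+2) + (m+2).choose (j+3) := Nat.choose_succ_succ _ _
  have h2 : (m+2).choose (j+2) = (m+1).choose (j+1) + (m+1).choose (j+2) := Nat.choose_succ_succ _ _
  have h3 : (m+2).choose (j+3) = (m+1).choose (j+2) + (m+1).choose (j+3) := Nat.choose_succ_succ _ _
  have h4 : (m+1).choose (j+1) = m.choose j + m.choose (j+1) := Nat.choose_succ_succ _ _
  have h5 : (m+1).choose (j+2) = m.choose (j+1) + m.choose (j+2) := Nat.choose_succ_succ _ _
  have h6 : (m+1).choose (j+3) = m.choose (j+2) + m.choose (j+3) := Nat.choose_succ_succ _ _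
  omega

lemma sum_id (m : ℕ) : ∀ k, ∑ i ∈ Finset.range k, (m+3).choose i =
    ∑ i ∈ Finset.range k, m.choose i + 3*∑ i ∈ Finset.range (k-1), m.choose i
      + 3*∑ i ∈ Finset.range (k-2), m.choose i + ∑ i ∈ Finset.range (k-3), m.choose i := by
  intro k
  induction k with
  | zero => simp
  | succ k ih =>
    rcases Nat.lt_or_ge k 3 with h | h
    · interval_cases k <;>
        simp [Finset.sum_range_succ, Nat.choose_succ_succ, Nat.choose_one_right] <;> ring
    · obtain ⟨j, rfl⟩ : ∃ j, k = j + 3 := ⟨k - 3, by omega⟩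
      have e1 : j + 3 + 1 - 1 = (j + 3 - 1) + 1 := by omega
      have e2 : j + 3 + 1 - 2 = (j + 3 - 2) + 1 := by omega
      have e3 : j + 3 + 1 - 3 = (j + 3 - 3) + 1 := by omega
      have e4 : j + 3 - 1 = j + 2 := by omega
      have e5 : j + 3 - 2 = j + 1 := by omega
      have e6 : j + 3 - 3 = j := by omega
      rw [Finset.sum_range_succ, ih, e1, e2, e3, e4, e5, e6,
        Finset.sum_range_succ (n := j+3), Finset.sum_range_succ (n := j+2),
        Finset.sum_range_succ (n := j+1), choose_id]
      have h0 := Finset.sum_range_succ (fun i => m.choose i) j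
      omega

lemma exists_disjoint_pair (W : Finset ℕ) (m : ℕ) (h : 2*m ≤ W.card) :
    ∃ P Q : Finset ℕ, P ⊆ W ∧ Q ⊆ W ∧ Disjoint P Q ∧ P.card = m ∧ Q.card = m := by
  obtain ⟨P, hPW, hP⟩ := Finset.exists_subset_card_eq (s := W) (n := m) (by omega)
  obtain ⟨Q, hQW, hQ⟩ := Finset.exists_subset_card_eq (s := W \ P) (n := m) (by
    rw [Finset.card_sdiff_of_subset hPW]; omega)
  refine ⟨P, Q, hPW, hQW.trans (Finset.sdiff_subset), ?_, hP, hQ⟩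
  rw [Finset.disjoint_left]
  intro a haP haQ
  exact (Finset.mem_sdiff.mp (hQW haQ)).2 haP

lemma interFam_eq' (n k : ℕ) (hk : 2 ≤ k) (hn : 2 * k < n) :
    interFam (((Finset.Icc 1 n).powersetCard k).filter
        (fun A => 2 ≤ (A ∩ ({1, 2, 3} : Finset ℕ)).card)) =
      ((Finset.Icc 1 n).powerset).filter
        (fun S => S.card < k ∧ (S ∩ ({1, 2, 3} : Finset ℕ)).Nonempty) := by
  have h123 : ({1,2,3} : Finset ℕ) ⊆ Finset.Icc 1 n := by
    intro x hx
    simp only [Finset.mem_insert, Finset.mem_singleton] at hx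
    rw [Finset.mem_Icc]
    omega
  ext S
  simp only [interFam, Finset.mem_image, Finset.mem_filter, Finset.mem_product,
    Finset.mem_powerset, Finset.mem_powersetCard, Prod.exists]
  constructor
  · rintro ⟨A, B, ⟨⟨⟨⟨hA1, hA2⟩, hA3⟩, ⟨hB1, hB2⟩, hB3⟩, hne⟩, rfl⟩
    refine ⟨(Finset.inter_subset_left).trans hA1, ?_, ?_⟩
    · have h1 : (A ∩ B).card ≤ k := hA2 ▸ Finset.card_le_card Finset.inter_subset_left
      rcases Nat.lt_or_ge (A ∩ B).card k with h | h
      · exact h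
      · exfalso
        have hAe : A ∩ B = A :=
          Finset.eq_of_subset_of_card_le Finset.inter_subset_left (by omega)
        have hBe : A ∩ B = B :=
          Finset.eq_of_subset_of_card_le Finset.inter_subset_right (by omega)
        exact hne (hAe ▸ hBe)
    · have hu := Finset.card_union_add_card_inter (A ∩ {1,2,3}) (B ∩ {1,2,3})
      have h3 : ((A ∩ {1,2,3}) ∪ (B ∩ {1,2,3})).card ≤ 3 := by
        have : (A ∩ {1,2,3}) ∪ (B ∩ {1,2,3}) ⊆ ({1,2,3} : Finset ℕ) :=
          Finset.union_subset Finset.inter_subset_right Finset.inter_subset_right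
        calc ((A ∩ {1,2,3}) ∪ (B ∩ {1,2,3})).card ≤ ({1,2,3} : Finset ℕ).card :=
              Finset.card_le_card this
          _ = 3 := by decide
      have heq : (A ∩ {1,2,3}) ∩ (B ∩ {1,2,3}) = (A ∩ B) ∩ {1,2,3} := by
        ext x; simp only [Finset.mem_inter]; tauto
      rw [← Finset.card_pos, ← heq]
      omega
  · rintro ⟨hS, hcard, hne⟩
    set T := S ∩ ({1,2,3} : Finset ℕ) with hT
    set W := (Finset.Icc 1 n) \ (S ∪ {1,2,3}) with hW
    have hTS : T ⊆ S := Finset.inter_subset_left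
    have hT123 : T ⊆ ({1,2,3} : Finset ℕ) := Finset.inter_subset_right
    have hWcard : n - (S.card + 3) ≤ W.card := by
      have h1 : (S ∪ ({1,2,3} : Finset ℕ)).card ≤ S.card + 3 := by
        have := Finset.card_union_le S ({1,2,3} : Finset ℕ)
        have h2 : ({1,2,3} : Finset ℕ).card = 3 := by decide
        omega
      have h2 : (Finset.Icc 1 n).card = n := by
        rw [Nat.card_Icc]; omega
      have h3 : (Finset.Icc 1 n).card - (S ∪ ({1,2,3} : Finset ℕ)).card ≤ W.card :=
        Finset.le_card_sdiff (S ∪ ({1,2,3} : Finset ℕ)) (Finset.Icc 1 n)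
      omega
    have hWS : ∀ x ∈ W, x ∉ S := by
      intro x hx
      rw [hW, Finset.mem_sdiff, Finset.mem_union] at hx
      tauto
    have hW123 : ∀ x ∈ W, x ∉ ({1,2,3} : Finset ℕ) := by
      intro x hx
      rw [hW, Finset.mem_sdiff, Finset.mem_union] at hx
      tauto
    have hWn : W ⊆ Finset.Icc 1 n := Finset.sdiff_subset
    have hScard1 : 1 ≤ S.card := Finset.card_pos.mpr ⟨hne.choose, hTS (hne.choose_spec)⟩
    rcases Nat.lt_or_ge T.card 2 with hTc | hTc
    · -- |T| = 1 case
      have hTc1 : T.card = 1 := by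
        have := Finset.card_pos.mpr hne
        omega
      obtain ⟨x, hx⟩ := Finset.card_eq_one.mp hTc1
      have hyz : (({1,2,3} : Finset ℕ) \ T).card = 2 := by
        rw [Finset.card_sdiff_of_subset hT123, hTc1]; decide
      obtain ⟨y, z, hyzne, hyzeq⟩ := Finset.card_eq_two.mp hyz
      have hy : y ∈ ({1,2,3} : Finset ℕ) \ T := by rw [hyzeq]; simp
      have hz : z ∈ ({1,2,3} : Finset ℕ) \ T := by rw [hyzeq]; simp
      rw [Finset.mem_sdiff] at hy hz
      have hyS : y ∉ S := fun h => hy.2 (Finset.mem_inter.mpr ⟨h, hy.1⟩)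
      have hzS : z ∉ S := fun h => hz.2 (Finset.mem_inter.mpr ⟨h, hz.1⟩)
      obtain ⟨P, Q, hPW, hQW, hPQ, hPc, hQc⟩ :=
        exists_disjoint_pair W (k - S.card - 1) (by omega)
      have hyP : y ∉ P := fun h => hW123 y (hPW h) hy.1
      have hzQ : z ∉ Q := fun h => hW123 z (hQW h) hz.1
      have hyQ : y ∉ Q := fun h => hW123 y (hQW h) hy.1
      have hzP : z ∉ P := fun h => hW123 z (hPW h) hz.1
      have hPS : ∀ a ∈ P, a ∉ S := fun a ha => hWS a (hPW ha)
      have hQS : ∀ a ∈ Q, a ∉ S := fun a ha => hWS a (hQW ha)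
      have hPQ' : ∀ a ∈ P, a ∉ Q := fun a ha => Finset.disjoint_left.mp hPQ ha
      refine ⟨insert y (S ∪ P), insert z (S ∪ Q), ⟨⟨⟨⟨?_, ?_⟩, ?_⟩, ⟨?_, ?_⟩, ?_⟩, ?_⟩, ?_⟩
      · exact Finset.insert_subset (h123 hy.1)
          (Finset.union_subset hS (hPW.trans hWn))
      · rw [Finset.card_insert_of_notMem (by
            simp only [Finset.mem_union]; tauto),
          Finset.card_union_of_disjoint (Finset.disjoint_left.mpr
            (fun a ha hb => hPS a hb ha))]
        omega
      · have hsub : ({x, y} : Finset ℕ) ⊆ insert y (S ∪ P) ∩ {1,2,3} := by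
          intro a ha
          rw [Finset.mem_insert, Finset.mem_singleton] at ha
          rcases ha with rfl | rfl
          · have hxT : a ∈ T := hx ▸ Finset.mem_singleton_self a
            exact Finset.mem_inter.mpr
              ⟨Finset.mem_insert_of_mem (Finset.mem_union_left _ (hTS hxT)), hT123 hxT⟩
          · exact Finset.mem_inter.mpr ⟨Finset.mem_insert_self _ _, hy.1⟩
        have hxy : x ≠ y := by
          intro h
          exact hy.2 (h ▸ (hx ▸ Finset.mem_singleton_self x))
        calc (2 : ℕ) = ({x, y} : Finset ℕ).card := (Finset.card_pair hxy).symm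
          _ ≤ _ := Finset.card_le_card hsub
      · exact Finset.insert_subset (h123 hz.1)
          (Finset.union_subset hS (hQW.trans hWn))
      · rw [Finset.card_insert_of_notMem (by
            simp only [Finset.mem_union]; tauto),
          Finset.card_union_of_disjoint (Finset.disjoint_left.mpr
            (fun a ha hb => hQS a hb ha))]
        omega
      · have hsub : ({x, z} : Finset ℕ) ⊆ insert z (S ∪ Q) ∩ {1,2,3} := by
          intro a ha
          rw [Finset.mem_insert, Finset.mem_singleton] at ha
          rcases ha with rfl | rfl
          · have hxT : a ∈ T := hx ▸ Finset.mem_singleton_self a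
            exact Finset.mem_inter.mpr
              ⟨Finset.mem_insert_of_mem (Finset.mem_union_left _ (hTS hxT)), hT123 hxT⟩
          · exact Finset.mem_inter.mpr ⟨Finset.mem_insert_self _ _, hz.1⟩
        have hxz : x ≠ z := by
          intro h
          exact hz.2 (h ▸ (hx ▸ Finset.mem_singleton_self x))
        calc (2 : ℕ) = ({x, z} : Finset ℕ).card := (Finset.card_pair hxz).symm
          _ ≤ _ := Finset.card_le_card hsub
      · -- distinct
        intro h
        have : y ∈ insert z (S ∪ Q) := h ▸ Finset.mem_insert_self y (S ∪ P)
        rw [Finset.mem_insert, Finset.mem_union] at this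
        rcases this with h' | h' | h'
        · exact hyzne h'
        · exact hyS h'
        · exact hyQ h'
      · -- intersection equals S
        ext a
        simp only [Finset.mem_inter, Finset.mem_insert, Finset.mem_union]
        constructor
        · rintro ⟨rfl | hA, h2⟩
          · rcases h2 with h' | h' | h'
            · exact absurd h' hyzne
            · exact absurd h' hyS
            · exact absurd h' hyQ
          · rcases hA with hA | hA
            · exact hA
            · rcases h2 with h' | h' | h'
              · exact absurd hA (h' ▸ hzP)
              · exact h'
              · exact absurd h' (hPQ' a hA)
        · intro ha
          exact ⟨Or.inr (Or.inl ha), Or.inr (Or.inl ha)⟩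
    · -- |T| ≥ 2 case
      have hScard2 : 2 ≤ S.card := hTc.trans (Finset.card_le_card hTS)
      obtain ⟨P, Q, hPW, hQW, hPQ, hPc, hQc⟩ :=
        exists_disjoint_pair W (k - S.card) (by omega)
      have hPS : ∀ a ∈ P, a ∉ S := fun a ha => hWS a (hPW ha)
      have hQS : ∀ a ∈ Q, a ∉ S := fun a ha => hWS a (hQW ha)
      have hPQ' : ∀ a ∈ P, a ∉ Q := fun a ha => Finset.disjoint_left.mp hPQ ha
      have hTsub : ∀ (R : Finset ℕ), 2 ≤ ((S ∪ R) ∩ ({1,2,3} : Finset ℕ)).card := by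
        intro R
        refine hTc.trans (Finset.card_le_card ?_)
        intro a ha
        exact Finset.mem_inter.mpr
          ⟨Finset.mem_union_left _ (Finset.mem_inter.mp ha).1,
           (Finset.mem_inter.mp ha).2⟩
      refine ⟨S ∪ P, S ∪ Q, ⟨⟨⟨⟨?_, ?_⟩, hTsub P⟩, ⟨?_, ?_⟩, hTsub Q⟩, ?_⟩, ?_⟩
      · exact Finset.union_subset hS (hPW.trans hWn)
      · rw [Finset.card_union_of_disjoint (Finset.disjoint_left.mpr
            (fun a ha hb => hPS a hb ha))]
        omega
      · exact Finset.union_subset hS (hQW.trans hWn)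
      · rw [Finset.card_union_of_disjoint (Finset.disjoint_left.mpr
            (fun a ha hb => hQS a hb ha))]
        omega
      · -- distinct
        intro h
        have hPne : P.Nonempty := by
          rw [← Finset.card_pos, hPc]; omega
        obtain ⟨p, hp⟩ := hPne
        have : p ∈ S ∪ Q := h ▸ Finset.mem_union_right S hp
        rw [Finset.mem_union] at this
        rcases this with h' | h'
        · exact hPS p hp h'
        · exact hPQ' p hp h'
      · ext a
        simp only [Finset.mem_inter, Finset.mem_union]
        constructor
        · rintro ⟨hA | hA, hB | hB⟩
          · exact hA
          · exact hA
          · exact hB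
          · exact absurd hB (hPQ' a hA)
        · intro ha; exact ⟨Or.inl ha, Or.inl ha⟩

theorem stmt_6 (n k : ℕ) (hk : 2 ≤ k) (hn : 2 * k < n) :
    (interFam (((Finset.Icc 1 n).powersetCard k).filter
        (fun A => 2 ≤ (A ∩ ({1, 2, 3} : Finset ℕ)).card))).card =
      3 * ∑ i ∈ Finset.range (k - 1), (n - 3).choose i +
      3 * ∑ i ∈ Finset.range (k - 2), (n - 3).choose i +
      ∑ i ∈ Finset.range (k - 3), (n - 3).choose i := by
  rw [interFam_eq' n k hk hn]
  have hsplit : ((Finset.Icc 1 n).powerset).filter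
        (fun S => S.card < k ∧ (S ∩ ({1, 2, 3} : Finset ℕ)).Nonempty)
      = (((Finset.Icc 1 n).powerset).filter (fun S => S.card < k)).filter
        (fun S => (S ∩ ({1, 2, 3} : Finset ℕ)).Nonempty) := by
    rw [Finset.filter_filter]
  have h1 := Finset.card_filter_add_card_filter_not
    (s := ((Finset.Icc 1 n).powerset).filter (fun S : Finset ℕ => S.card < k))
    (p := fun S => (S ∩ ({1, 2, 3} : Finset ℕ)).Nonempty)
  have hc1 : (Finset.Icc 1 n).card = n := by rw [Nat.card_Icc]; omega
  have hc4 : (Finset.Icc 4 n).card = n - 3 := by rw [Nat.card_Icc]; omega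
  have h2 : (((Finset.Icc 1 n).powerset).filter (fun S : Finset ℕ => S.card < k)).card
      = ∑ i ∈ Finset.range k, n.choose i := by
    rw [count_small, hc1]
  have h3 : ((((Finset.Icc 1 n).powerset).filter (fun S : Finset ℕ => S.card < k)).filter
        (fun S => ¬ (S ∩ ({1, 2, 3} : Finset ℕ)).Nonempty)).card
      = ∑ i ∈ Finset.range k, (n-3).choose i := by
    have heq : (((Finset.Icc 1 n).powerset).filter (fun S : Finset ℕ => S.card < k)).filter
          (fun S => ¬ (S ∩ ({1, 2, 3} : Finset ℕ)).Nonempty)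
        = ((Finset.Icc 4 n).powerset).filter (fun S : Finset ℕ => S.card < k) := by
      ext S
      rw [Finset.filter_filter, Finset.mem_filter, Finset.mem_filter,
        Finset.mem_powerset, Finset.mem_powerset, Finset.not_nonempty_iff_eq_empty,
        Finset.eq_empty_iff_forall_notMem]
      constructor
      · rintro ⟨hsub, hc, hemp⟩
        refine ⟨fun x hx => ?_, hc⟩
        have h4 := hsub hx
        rw [Finset.mem_Icc] at h4 ⊢
        have h5 := hemp x
        rw [Finset.mem_inter] at h5
        have h6 : x ∉ ({1,2,3} : Finset ℕ) := fun hmem => h5 ⟨hx, hmem⟩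
        simp only [Finset.mem_insert, Finset.mem_singleton] at h6
        omega
      · rintro ⟨hsub, hc⟩
        refine ⟨fun x hx => ?_, hc, fun x => ?_⟩
        · have h4 := hsub hx
          rw [Finset.mem_Icc] at h4 ⊢
          omega
        · intro hmem
          rw [Finset.mem_inter] at hmem
          have h4 := hsub hmem.1
          rw [Finset.mem_Icc] at h4
          have h6 := hmem.2
          simp only [Finset.mem_insert, Finset.mem_singleton] at h6
          omega
    rw [heq, count_small, hc4]
  have h5 := sum_id (n - 3) k
  have h6 : n - 3 + 3 = n := by omega
  rw [h6] at h5
  rw [hsplit]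
  omega
end

section
/- Let n > 2k ≥ 4, X = {1,...,n}, x ∈ X, and let S_x be the family of all k-subsets of X containing x. Then the number of distinct intersections F ∩ F' over distinct F, F' ∈ S_x equals Σ_{i=0}^{k-2} C(n-1, i). -/
open Finset

theorem stmt_8 (n k : ℕ) (hk : 2 ≤ k) (hn : 2 * k < n) (x : ℕ)
    (hx : x ∈ Finset.Icc 1 n) :
    (interFam (((Finset.Icc 1 n).powersetCard k).filter
        (fun A => x ∈ A))).card =
      ∑ i ∈ Finset.range (k - 1), (n - 1).choose i := by
  have hx1 : 1 ≤ x := (Finset.mem_Icc.mp hx).1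
  have hcardIcc : (Finset.Icc 1 n).card = n := by simp [Nat.card_Icc]
  set E := (Finset.Icc 1 n).erase x with hE
  have hEcard : E.card = n - 1 := by rw [hE, card_erase_of_mem hx, hcardIcc]
  have hxE : x ∉ E := notMem_erase x _
  have hEsub : E ⊆ Finset.Icc 1 n := erase_subset x _
  have key : interFam (((Finset.Icc 1 n).powersetCard k).filter (fun A => x ∈ A))
      = (Finset.range (k-1)).biUnion (fun i => (E.powersetCard i).image (insert x ·)) := by
    ext S
    simp only [interFam, Finset.mem_image, Finset.mem_filter, Finset.mem_product,
      Finset.mem_biUnion, Finset.mem_range, Finset.mem_powersetCard]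
    constructor
    · rintro ⟨⟨F, F'⟩, ⟨⟨⟨hF, hxF⟩, hF', hxF'⟩, hne⟩, rfl⟩
      simp only [Finset.mem_powersetCard] at hF hF'
      have hssub : F ∩ F' ⊆ F := inter_subset_left
      have hsne : F ∩ F' ≠ F := by
        intro h
        have : F ⊆ F' := by rw [← h]; exact inter_subset_right
        exact hne (Finset.eq_of_subset_of_card_le this (by rw [hF.2, hF'.2]))
      have hlt : (F ∩ F').card < k := by
        rw [← hF.2]; exact Finset.card_lt_card (lt_of_le_of_ne hssub hsne)
      have hxS : x ∈ F ∩ F' := Finset.mem_inter.mpr ⟨hxF, hxF'⟩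
      refine ⟨(F ∩ F').card - 1, ?_, (F ∩ F').erase x, ⟨?_, ?_⟩, ?_⟩
      · have hpos : 1 ≤ (F ∩ F').card := Finset.card_pos.mpr ⟨x, hxS⟩
        omega
      · intro a ha
        exact Finset.mem_erase.mpr ⟨(Finset.mem_erase.mp ha).1,
          hF.1 (inter_subset_left (Finset.mem_erase.mp ha).2)⟩
      · rw [card_erase_of_mem hxS]
      · exact Finset.insert_erase hxS
    · rintro ⟨i, hik, B, ⟨hBE, hBcard⟩, rfl⟩
      have hxB : x ∉ B := fun h => hxE (hBE h)
      set S := insert x B with hS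
      have hScard : S.card = i + 1 := by rw [hS, card_insert_of_notMem hxB, hBcard]
      have hSsub : S ⊆ Finset.Icc 1 n := by
        rw [hS]; exact Finset.insert_subset hx (hBE.trans hEsub)
      set R := Finset.Icc 1 n \ S with hR
      have hRcard : R.card = n - (i + 1) := by
        rw [hR, Finset.card_sdiff_of_subset hSsub, hcardIcc, hScard]
      obtain ⟨A, hAR, hAcard⟩ : ∃ A ⊆ R, A.card = k - (i + 1) :=
        Finset.exists_subset_card_eq (by omega)
      obtain ⟨A', hA'R, hA'card⟩ : ∃ A' ⊆ R \ A, A'.card = k - (i + 1) := by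
        apply Finset.exists_subset_card_eq
        rw [Finset.card_sdiff_of_subset hAR, hRcard, hAcard]; omega
      have hdisjSA : Disjoint S A := by
        refine Finset.disjoint_left.mpr fun a haS haA => ?_
        exact (Finset.mem_sdiff.mp (hAR haA)).2 haS
      have hA'R' : A' ⊆ R := hA'R.trans Finset.sdiff_subset
      have hdisjSA' : Disjoint S A' := by
        refine Finset.disjoint_left.mpr fun a haS haA => ?_
        exact (Finset.mem_sdiff.mp (hA'R' haA)).2 haS
      have hdisjAA' : Disjoint A A' := by
        refine Finset.disjoint_left.mpr fun a haA haA' => ?_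
        exact (Finset.mem_sdiff.mp (hA'R haA')).2 haA
      refine ⟨⟨S ∪ A, S ∪ A'⟩, ⟨⟨?_, ?_⟩, ?_⟩, ?_⟩
      · constructor
        · refine ⟨Finset.union_subset hSsub (hAR.trans Finset.sdiff_subset), ?_⟩
          rw [Finset.card_union_of_disjoint hdisjSA, hScard, hAcard]; omega
        · exact Finset.mem_union_left _ (Finset.mem_insert_self x B)
      · constructor
        · refine ⟨Finset.union_subset hSsub (hA'R'.trans Finset.sdiff_subset), ?_⟩
          rw [Finset.card_union_of_disjoint hdisjSA', hScard, hA'card]; omega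
        · exact Finset.mem_union_left _ (Finset.mem_insert_self x B)
      · have hAne : A.Nonempty := Finset.card_pos.mp (by omega)
        obtain ⟨a, haA⟩ := hAne
        simp only [ne_eq]
        intro h
        have : a ∈ S ∪ A' := h ▸ Finset.mem_union_right _ haA
        rcases Finset.mem_union.mp this with h' | h'
        · exact (Finset.disjoint_left.mp hdisjSA) h' haA
        · exact (Finset.disjoint_left.mp hdisjAA') haA h'
      · have : (S ∪ A) ∩ (S ∪ A') = S ∪ (A ∩ A') := by
          rw [Finset.union_inter_distrib_left]
        rw [this, Finset.disjoint_iff_inter_eq_empty.mp hdisjAA', Finset.union_empty]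
  rw [key]
  rw [Finset.card_biUnion]
  · refine Finset.sum_congr rfl fun i _ => ?_
    rw [Finset.card_image_of_injOn, Finset.card_powersetCard, hEcard]
    intro B hB B' hB' hBB'
    simp only [Finset.mem_coe, Finset.mem_powersetCard] at hB hB'
    have h1 : x ∉ B := fun h => hxE (hB.1 h)
    have h2 : x ∉ B' := fun h => hxE (hB'.1 h)
    rw [← Finset.erase_insert h1, ← Finset.erase_insert h2]
    exact congrArg (·.erase x) hBB'
  · intro i _ j _ hij
    refine Finset.disjoint_left.mpr fun S hSi hSj => ?_
    simp only [Finset.mem_image, Finset.mem_powersetCard] at hSi hSj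
    obtain ⟨B, ⟨hBE, hBc⟩, rfl⟩ := hSi
    obtain ⟨B', ⟨hB'E, hB'c⟩, hBB'⟩ := hSj
    have h1 : x ∉ B := fun h => hxE (hBE h)
    have h2 : x ∉ B' := fun h => hxE (hB'E h)
    apply hij
    rw [← hBc, ← hB'c]
    have : B'.card + 1 = B.card + 1 := by
      rw [← Finset.card_insert_of_notMem h1, ← Finset.card_insert_of_notMem h2, hBB']
    omega
end

section
/- Let n > 2k ≥ 4, x ∈ X = {1,...,n}, let S_x be the full star of k-subsets containing x, and let A be the family of k-subsets A with |A ∩ {1,2,3}| ≥ 2. Then |I(S_x)| < (2/3)·|I(A)|, where I(F) denotes the family of distinct pairwise intersections of distinct members of F. -/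
open Finset

lemma mem_interFam {F : Finset (Finset ℕ)} {S : Finset ℕ} :
    S ∈ interFam F ↔ ∃ A ∈ F, ∃ B ∈ F, A ≠ B ∧ A ∩ B = S := by
  simp only [interFam, mem_image, mem_filter, mem_product, Prod.exists]
  constructor
  · rintro ⟨a, b, ⟨⟨ha, hb⟩, hne⟩, rfl⟩; exact ⟨a, ha, b, hb, hne, rfl⟩
  · rintro ⟨a, ha, b, hb, hne, rfl⟩; exact ⟨a, b, ⟨⟨ha, hb⟩, hne⟩, rfl⟩

/-- Construction lemma: realize `S` as an intersection of two `k`-sets in the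
family `𝒜` of `k`-subsets meeting `{1,2,3}` in at least two points. -/
lemma construct (n k : ℕ) (hk : 2 ≤ k) (hn : 2 * k < n)
    (S P Q : Finset ℕ) (hSP : S ⊆ P) (hSQ : S ⊆ Q) (hPQ : P ∩ Q = S)
    (hP : P ⊆ Finset.Icc 1 n) (hQ : Q ⊆ Finset.Icc 1 n)
    (hPk : P.card ≤ k) (hQk : Q.card ≤ k) (hSk : S.card < k)
    (hP3 : 2 ≤ (P ∩ ({1,2,3} : Finset ℕ)).card)
    (hQ3 : 2 ≤ (Q ∩ ({1,2,3} : Finset ℕ)).card) :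
    S ∈ interFam (((Finset.Icc 1 n).powersetCard k).filter
      (fun A => 2 ≤ (A ∩ ({1, 2, 3} : Finset ℕ)).card)) := by
  have hIcc : (Finset.Icc 1 n).card = n := by simp
  have hPQsub : P ∪ Q ⊆ Finset.Icc 1 n := union_subset hP hQ
  have hu : (P ∪ Q).card + S.card = P.card + Q.card := by
    rw [← hPQ]; exact card_union_add_card_inter P Q
  -- first extension
  have h1 : k - P.card ≤ ((Finset.Icc 1 n) \ (P ∪ Q)).card := by
    rw [card_sdiff_of_subset hPQsub, hIcc]
    have := card_le_card hPQsub
    omega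
  obtain ⟨EA, hEAsub, hEAcard⟩ := Finset.exists_subset_card_eq h1
  set A := P ∪ EA with hAdef
  have hdisjA : Disjoint P EA := by
    refine disjoint_left.2 fun a haP haE => ?_
    exact (mem_sdiff.1 (hEAsub haE)).2 (mem_union_left _ haP)
  have hAcard : A.card = k := by
    rw [hAdef, card_union_of_disjoint hdisjA, hEAcard]; omega
  have hAsub : A ⊆ Finset.Icc 1 n :=
    union_subset hP (hEAsub.trans (sdiff_subset))
  -- second extension
  have h2 : k - Q.card ≤ ((Finset.Icc 1 n) \ (P ∪ Q ∪ EA)).card := by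
    have hsub2 : P ∪ Q ∪ EA ⊆ Finset.Icc 1 n :=
      union_subset hPQsub (hEAsub.trans (sdiff_subset))
    rw [card_sdiff_of_subset hsub2, hIcc]
    have hd : Disjoint (P ∪ Q) EA := by
      refine disjoint_left.2 fun a haP haE => ?_
      exact (mem_sdiff.1 (hEAsub haE)).2 haP
    rw [card_union_of_disjoint hd, hEAcard]
    have := card_le_card hPQsub
    omega
  obtain ⟨EB, hEBsub, hEBcard⟩ := Finset.exists_subset_card_eq h2
  set B := Q ∪ EB with hBdef
  have hdisjB : Disjoint Q EB := by
    refine disjoint_left.2 fun a haQ haE => ?_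
    exact (mem_sdiff.1 (hEBsub haE)).2 (mem_union_left _ (mem_union_right _ haQ))
  have hBcard : B.card = k := by
    rw [hBdef, card_union_of_disjoint hdisjB, hEBcard]; omega
  have hBsub : B ⊆ Finset.Icc 1 n :=
    union_subset hQ (hEBsub.trans (sdiff_subset))
  -- intersection is S
  have hAB : A ∩ B = S := by
    apply subset_antisymm
    · intro a ha
      rw [mem_inter, hAdef, hBdef, mem_union, mem_union] at ha
      obtain ⟨h1' | h1', h2' | h2'⟩ := ha
      · rw [← hPQ]; exact mem_inter.2 ⟨h1', h2'⟩
      · exact absurd (mem_union_left _ (mem_union_left _ h1'))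
          (mem_sdiff.1 (hEBsub h2')).2
      · exact ((mem_sdiff.1 (hEAsub h1')).2 (mem_union_right _ h2')).elim
      · exact ((mem_sdiff.1 (hEBsub h2')).2 (mem_union_right _ h1')).elim
    · intro a ha
      exact mem_inter.2 ⟨mem_union_left _ (hSP ha), mem_union_left _ (hSQ ha)⟩
  refine mem_interFam.2 ⟨A, ?_, B, ?_, ?_, hAB⟩
  · refine mem_filter.2 ⟨mem_powersetCard.2 ⟨hAsub, hAcard⟩, ?_⟩
    exact le_trans hP3 (card_le_card (inter_subset_inter_right (by
      exact fun a haP => mem_union_left _ haP)))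
  · refine mem_filter.2 ⟨mem_powersetCard.2 ⟨hBsub, hBcard⟩, ?_⟩
    exact le_trans hQ3 (card_le_card (inter_subset_inter_right (by
      exact fun a haQ => mem_union_left _ haQ)))
  · intro h
    rw [h, inter_self] at hAB
    rw [← hAB] at hSk
    omega

theorem stmt_10 (n k : ℕ) (hk : 2 ≤ k) (hn : 2 * k < n) (x : ℕ)
    (hx : x ∈ Finset.Icc 1 n) :
    ((interFam (((Finset.Icc 1 n).powersetCard k).filter
        (fun A => x ∈ A))).card : ℚ) <
      (2 / 3 : ℚ) * (interFam (((Finset.Icc 1 n).powersetCard k).filter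
        (fun A => 2 ≤ (A ∩ ({1, 2, 3} : Finset ℕ)).card))).card := by
  have hn5 : 5 ≤ n := by omega
  have h1n : (1 : ℕ) ∈ Finset.Icc 1 n := by simp; omega
  have h2n : (2 : ℕ) ∈ Finset.Icc 1 n := by simp [Finset.mem_Icc]; omega
  have h3n : (3 : ℕ) ∈ Finset.Icc 1 n := by simp [Finset.mem_Icc]; omega
  set 𝒜 := ((Finset.Icc 1 n).powersetCard k).filter
      (fun A => 2 ≤ (A ∩ ({1, 2, 3} : Finset ℕ)).card) with h𝒜
  set Sx := ((Finset.Icc 1 n).powersetCard k).filter (fun A => x ∈ A) with hSx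
  set K := ((Finset.Icc 1 n).powerset).filter (fun S => S.card < k ∧ x ∈ S) with hK
  set J1 := ((Finset.Icc 1 n).powerset).filter (fun S => S.card < k ∧ 1 ∈ S) with hJ1
  set J2 := ((Finset.Icc 1 n).powerset).filter
      (fun S => S.card < k ∧ 1 ∉ S ∧ 2 ∈ S) with hJ2
  set J3 := ((Finset.Icc 1 n).powerset).filter
      (fun S => S.card < k ∧ 1 ∉ S ∧ 2 ∉ S ∧ 3 ∈ S) with hJ3
  -- Step 1: interFam Sx ⊆ K
  have step1 : interFam Sx ⊆ K := by
    intro S hS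
    obtain ⟨A, hA, B, hB, hne, rfl⟩ := mem_interFam.1 hS
    rw [hSx, mem_filter, mem_powersetCard] at hA hB
    refine mem_filter.2 ⟨mem_powerset.2 ((inter_subset_left).trans hA.1.1), ?_, ?_⟩
    · rcases lt_or_ge (A ∩ B).card k with h | h
      · exact h
      · exfalso
        have h' : A ∩ B = A := eq_of_subset_of_card_le inter_subset_left (by omega)
        have : A ⊆ B := by rw [← h']; exact inter_subset_right
        exact hne (eq_of_subset_of_card_le this (by omega))
    · exact mem_inter.2 ⟨hA.2, hB.2⟩
  -- Step 2: |K| ≤ |J1| via swap x 1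
  have step2 : K.card ≤ J1.card := by
    have hinj : Function.Injective (fun S : Finset ℕ => S.image (Equiv.swap x 1)) :=
      fun S T h => by
        have := Finset.image_injective (Equiv.swap x 1).injective
        exact this h
    calc K.card = (K.image (fun S => S.image (Equiv.swap x 1))).card :=
          (Finset.card_image_of_injective K hinj).symm
      _ ≤ J1.card := by
          apply card_le_card
          intro T hT
          obtain ⟨S, hS, rfl⟩ := mem_image.1 hT
          rw [hK, mem_filter, mem_powerset] at hS
          obtain ⟨hsub, hcard, hxS⟩ := hS
          refine mem_filter.2 ⟨mem_powerset.2 ?_, ?_, ?_⟩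
          · intro a ha
            obtain ⟨b, hb, rfl⟩ := mem_image.1 ha
            rcases eq_or_ne b x with rfl | hbx
            · rwa [Equiv.swap_apply_left]
            · rcases eq_or_ne b 1 with rfl | hb1
              · rwa [Equiv.swap_apply_right]
              · rw [Equiv.swap_apply_of_ne_of_ne hbx hb1]; exact hsub hb
          · rw [Finset.card_image_of_injective S (Equiv.swap x 1).injective]; exact hcard
          · refine mem_image.2 ⟨x, hxS, Equiv.swap_apply_left x 1⟩
  -- Step 3: |J1| ≤ 2 * |J2| via fiber-2 map
  have step3 : J1.card ≤ 2 * J2.card := by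
    have hmap : J1.image (fun S => insert 2 (S.erase 1)) ⊆ J2 := by
      intro T hT
      obtain ⟨S, hS, rfl⟩ := mem_image.1 hT
      rw [hJ1, mem_filter, mem_powerset] at hS
      obtain ⟨hsub, hcard, h1S⟩ := hS
      refine mem_filter.2 ⟨mem_powerset.2 ?_, ?_, ?_, ?_⟩
      · intro a ha
        rcases mem_insert.1 ha with rfl | ha'
        · exact h2n
        · exact hsub (erase_subset _ _ ha')
      · calc (insert 2 (S.erase 1)).card ≤ (S.erase 1).card + 1 := card_insert_le _ _
          _ = S.card - 1 + 1 := by rw [card_erase_of_mem h1S]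
          _ ≤ S.card := by
              have : 1 ≤ S.card := card_pos.2 ⟨1, h1S⟩
              omega
          _ < k := hcard
      · simp only [mem_insert, mem_erase]
        push_neg
        exact ⟨by norm_num, fun h => absurd rfl h⟩
      · exact mem_insert_self _ _
    have hfib : ∀ T ∈ J1.image (fun S => insert 2 (S.erase 1)),
        (J1.filter (fun S => insert 2 (S.erase 1) = T)).card ≤ 2 := by
      intro T hT
      have hsub : J1.filter (fun S => insert 2 (S.erase 1) = T) ⊆
          {insert 1 T, insert 1 (T.erase 2)} := by
        intro S hS
        rw [mem_filter] at hS
        obtain ⟨hS1, hfT⟩ := hS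
        rw [hJ1, mem_filter] at hS1
        obtain ⟨-, -, h1S⟩ := hS1
        simp only [mem_insert, mem_singleton]
        by_cases h2S : 2 ∈ S
        · left
          have hTe : T = S.erase 1 := by
            rw [← hfT]
            exact insert_eq_self.2 (mem_erase.2 ⟨by norm_num, h2S⟩)
          rw [hTe, insert_erase h1S]
        · right
          have hTe : T.erase 2 = S.erase 1 := by
            rw [← hfT, erase_insert]
            simp only [mem_erase]
            exact fun h => h2S h.2
          rw [hTe, insert_erase h1S]
      calc (J1.filter (fun S => insert 2 (S.erase 1) = T)).card
          ≤ ({insert 1 T, insert 1 (T.erase 2)} : Finset (Finset ℕ)).card :=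
            card_le_card hsub
        _ ≤ 2 := card_insert_le _ _ |>.trans (by simp)
    calc J1.card ≤ 2 * (J1.image (fun S => insert 2 (S.erase 1))).card :=
          Finset.card_le_mul_card_image _ 2 hfib
      _ ≤ 2 * J2.card := by
          exact Nat.mul_le_mul_left 2 (card_le_card hmap)
  -- Step 4: J1 ∪ J2 ∪ J3 ⊆ interFam 𝒜
  have stepJ1 : J1 ⊆ interFam 𝒜 := by
    intro S hS
    rw [hJ1, mem_filter, mem_powerset] at hS
    obtain ⟨hsub, hcard, h1S⟩ := hS
    have hPQ : (insert 2 S) ∩ (insert 3 S) = S := by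
      ext a
      simp only [mem_inter, mem_insert]
      constructor
      · rintro ⟨rfl | h, h3 | h⟩ <;> first | omega | assumption
      · intro h; exact ⟨Or.inr h, Or.inr h⟩
    refine construct n k hk hn S (insert 2 S) (insert 3 S)
      (subset_insert _ _) (subset_insert _ _) hPQ
      (insert_subset h2n hsub) (insert_subset h3n hsub)
      ((card_insert_le _ _).trans (by omega)) ((card_insert_le _ _).trans (by omega))
      hcard ?_ ?_
    · have : ({1, 2} : Finset ℕ) ⊆ (insert 2 S) ∩ {1,2,3} := by
        intro a ha
        simp only [mem_insert, mem_singleton] at ha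
        rcases ha with rfl | rfl
        · exact mem_inter.2 ⟨mem_insert_of_mem h1S, by norm_num⟩
        · exact mem_inter.2 ⟨mem_insert_self _ _, by norm_num⟩
      calc 2 = ({1, 2} : Finset ℕ).card := by norm_num
        _ ≤ _ := card_le_card this
    · have : ({1, 3} : Finset ℕ) ⊆ (insert 3 S) ∩ {1,2,3} := by
        intro a ha
        simp only [mem_insert, mem_singleton] at ha
        rcases ha with rfl | rfl
        · exact mem_inter.2 ⟨mem_insert_of_mem h1S, by norm_num⟩
        · exact mem_inter.2 ⟨mem_insert_self _ _, by norm_num⟩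
      calc 2 = ({1, 3} : Finset ℕ).card := by norm_num
        _ ≤ _ := card_le_card this
  have stepJ23 : ∀ S, S ⊆ Finset.Icc 1 n → S.card < k → 1 ∉ S →
      ∀ c, c ∈ S → (c = 2 ∨ c = 3) → S ∈ interFam 𝒜 := by
    intro S hsub hcard h1S c hcS hc23
    have hPQ : (insert 1 S) ∩ (insert 2 (insert 3 S)) = S := by
      ext a
      simp only [mem_inter, mem_insert]
      constructor
      · rintro ⟨rfl | h, h2 | h2 | h2⟩ <;> first | omega | assumption
      · intro h; exact ⟨Or.inr h, Or.inr (Or.inr h)⟩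
    have hQcard : (insert 2 (insert 3 S)).card ≤ S.card + 1 := by
      rcases hc23 with rfl | rfl
      · rw [insert_eq_self.2 (mem_insert_of_mem hcS)]
        exact (card_insert_le _ _)
      · calc (insert 2 (insert 3 S)).card ≤ (insert 3 S).card + 1 := card_insert_le _ _
          _ = S.card + 1 := by rw [insert_eq_self.2 hcS]
    refine construct n k hk hn S (insert 1 S) (insert 2 (insert 3 S))
      (subset_insert _ _) ((subset_insert _ _).trans (subset_insert _ _)) hPQ
      (insert_subset h1n hsub) (insert_subset h2n (insert_subset h3n hsub))
      ((card_insert_le _ _).trans (by omega)) (hQcard.trans (by omega))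
      hcard ?_ ?_
    · have : ({1, c} : Finset ℕ) ⊆ (insert 1 S) ∩ {1,2,3} := by
        intro a ha
        simp only [mem_insert, mem_singleton] at ha
        rcases ha with rfl | rfl
        · exact mem_inter.2 ⟨mem_insert_self _ _, by norm_num⟩
        · refine mem_inter.2 ⟨mem_insert_of_mem hcS, ?_⟩
          rcases hc23 with rfl | rfl <;> norm_num
      calc 2 = ({1, c} : Finset ℕ).card := by
            rw [card_insert_of_notMem (by simp; omega), card_singleton]
        _ ≤ _ := card_le_card this
    · have : ({2, 3} : Finset ℕ) ⊆ (insert 2 (insert 3 S)) ∩ {1,2,3} := by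
        intro a ha
        simp only [mem_insert, mem_singleton] at ha
        rcases ha with rfl | rfl
        · exact mem_inter.2 ⟨mem_insert_self _ _, by norm_num⟩
        · exact mem_inter.2 ⟨mem_insert_of_mem (mem_insert_self _ _), by norm_num⟩
      calc 2 = ({2, 3} : Finset ℕ).card := by norm_num
        _ ≤ _ := card_le_card this
  have stepJ2 : J2 ⊆ interFam 𝒜 := by
    intro S hS
    rw [hJ2, mem_filter, mem_powerset] at hS
    exact stepJ23 S hS.1 hS.2.1 hS.2.2.1 2 hS.2.2.2 (Or.inl rfl)
  have stepJ3 : J3 ⊆ interFam 𝒜 := by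
    intro S hS
    rw [hJ3, mem_filter, mem_powerset] at hS
    exact stepJ23 S hS.1 hS.2.1 hS.2.2.1 3 hS.2.2.2.2 (Or.inr rfl)
  -- disjointness and union bound
  have hd12 : Disjoint J1 J2 := by
    refine disjoint_left.2 fun S h1 h2 => ?_
    rw [hJ1, mem_filter] at h1; rw [hJ2, mem_filter] at h2
    exact h2.2.2.1 h1.2.2
  have hd13 : Disjoint J1 J3 := by
    refine disjoint_left.2 fun S h1 h2 => ?_
    rw [hJ1, mem_filter] at h1; rw [hJ3, mem_filter] at h2
    exact h2.2.2.1 h1.2.2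
  have hd23 : Disjoint J2 J3 := by
    refine disjoint_left.2 fun S h1 h2 => ?_
    rw [hJ2, mem_filter] at h1; rw [hJ3, mem_filter] at h2
    exact h2.2.2.2.1 h1.2.2.2
  have hunion : J1.card + J2.card + J3.card ≤ (interFam 𝒜).card := by
    have h12 : (J1 ∪ J2).card = J1.card + J2.card := card_union_of_disjoint hd12
    have h123 : (J1 ∪ J2 ∪ J3).card = J1.card + J2.card + J3.card := by
      rw [card_union_of_disjoint (disjoint_union_left.2 ⟨hd13, hd23⟩), h12]
    rw [← h123]
    exact card_le_card (union_subset (union_subset stepJ1 stepJ2) stepJ3)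
  have hJ3pos : 1 ≤ J3.card := by
    refine card_pos.2 ⟨{3}, ?_⟩
    rw [hJ3, mem_filter, mem_powerset]
    refine ⟨singleton_subset_iff.2 h3n, by simp; omega, ?_, ?_, ?_⟩ <;> simp
  -- final arithmetic
  have hmain : 3 * (interFam Sx).card < 2 * (interFam 𝒜).card := by
    have hKle : (interFam Sx).card ≤ K.card := card_le_card step1
    omega
  have h1 : (3 : ℚ) * (interFam Sx).card < 2 * (interFam 𝒜).card := by
    exact_mod_cast hmain
  rw [div_mul_eq_mul_div, lt_div_iff₀ (by norm_num : (0:ℚ) < 3)]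
  linarith [h1]
end

section
/- Let k ≥ 2, 2 ≤ ℓ ≤ k, and n > 2k. Let F be a saturated intersecting family of k-subsets of {1,...,n}, let B be its family of minimal transversals, and let t = min{|B| : B ∈ B} ≥ 2. Assume that the covering number of B^{(≤ℓ)} (the members of B of size at most ℓ) is at least 2, i.e., no single element meets all members of B of size at most ℓ. Then the number of members of B of size exactly ℓ is at most t · ℓ · k^{ℓ−2}. -/
open Finset

open scoped Classical

/-- Any transversal can be extended to a member of `F` avoiding a given small set. -/
lemma extend_trans (n k : ℕ) (hk : 1 ≤ k) (hn : 2 * k < n) (F : Finset (Finset ℕ))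
    (hsat : Saturated n k F) (T D : Finset ℕ) (hT : Transversal n k F T)
    (hD : D.card ≤ k) (hdisj : Disjoint T D) :
    ∃ T' ∈ F, T ⊆ T' ∧ Disjoint T' D := by
  obtain ⟨hTsub, hTcard, hTmeet⟩ := hT
  have hTU : T ⊆ Finset.Icc 1 n \ D := by
    intro x hx
    exact Finset.mem_sdiff.mpr ⟨hTsub hx, Finset.disjoint_left.mp hdisj hx⟩
  have hIcard : (Finset.Icc 1 n).card = n := by simp
  have hUcard : k ≤ (Finset.Icc 1 n \ D).card := by
    have := Finset.le_card_sdiff D (Finset.Icc 1 n)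
    omega
  obtain ⟨T', hTT', hT'U, hT'card⟩ := Finset.exists_subsuperset_card_eq hTU hTcard hUcard
  have hT'sub : T' ⊆ Finset.Icc 1 n := hT'U.trans (Finset.sdiff_subset)
  have hT'disj : Disjoint T' D := Finset.disjoint_of_subset_left hT'U (Finset.sdiff_disjoint)
  have hT'mem : T' ∈ (Finset.Icc 1 n).powersetCard k :=
    Finset.mem_powersetCard.mpr ⟨hT'sub, hT'card⟩
  have hT'F : T' ∈ F := by
    by_contra hnotF
    apply hsat.2 T' hT'mem hnotF
    intro X hX Y hY
    have hT'meet : ∀ Z ∈ F, (T' ∩ Z).Nonempty := fun Z hZ =>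
      (hTmeet Z hZ).mono (Finset.inter_subset_inter hTT' le_rfl)
    rcases Finset.mem_insert.mp hX with hX | hX
    · rcases Finset.mem_insert.mp hY with hY | hY
      · rw [hX, hY, Finset.inter_self]
        exact Finset.card_pos.mp (by omega)
      · rw [hX]
        exact hT'meet Y hY
    · rcases Finset.mem_insert.mp hY with hY | hY
      · rw [hY, Finset.inter_comm]
        exact hT'meet X hX
      · exact hsat.1 X hX Y hY
  exact ⟨T', hT'F, hTT', hT'disj⟩

/-- Any two transversals of a saturated family meet. -/
lemma trans_meet (n k : ℕ) (hk : 1 ≤ k) (hn : 2 * k < n) (F : Finset (Finset ℕ))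
    (hsat : Saturated n k F) (T₁ T₂ : Finset ℕ) (h1 : Transversal n k F T₁)
    (h2 : Transversal n k F T₂) : (T₁ ∩ T₂).Nonempty := by
  by_contra h
  have hdisj : Disjoint T₁ T₂ := by
    rw [Finset.disjoint_iff_inter_eq_empty]
    exact Finset.not_nonempty_iff_eq_empty.mp h
  obtain ⟨T', hT'F, hTT', hT'disj⟩ :=
    extend_trans n k hk hn F hsat T₁ T₂ h1 h2.2.1 hdisj
  have := h2.2.2 T' hT'F
  rw [Finset.inter_comm] at this
  exact Finset.not_nonempty_iff_eq_empty.mpr (Finset.disjoint_iff_inter_eq_empty.mp hT'disj)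
    this

/-- The branching bound: sets in the family containing a fixed `P`. -/
lemma key (n k ℓ : ℕ) (hℓk : ℓ ≤ k) (F : Finset (Finset ℕ))
    (hF : F ⊆ (Finset.Icc 1 n).powersetCard k) :
    ∀ (d : ℕ) (P : Finset ℕ), P.card + d = ℓ →
    (((Finset.Icc 1 n).powerset.filter
        (fun B => MinTrans n k F B ∧ B.card = ℓ)).filter (fun B => P ⊆ B)).card ≤ k ^ d := by
  intro d
  induction d with
  | zero =>
    intro P hP
    rw [pow_zero]
    apply Finset.card_le_one.mpr
    intro B hB C hC
    simp only [Finset.mem_filter, Finset.mem_powerset] at hB hC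
    have hBP : B = P := (Finset.eq_of_subset_of_card_le hB.2 (by omega)).symm
    have hCP : C = P := (Finset.eq_of_subset_of_card_le hC.2 (by omega)).symm
    rw [hBP, hCP]
  | succ d ih =>
    intro P hP
    set S := ((Finset.Icc 1 n).powerset.filter
        (fun B => MinTrans n k F B ∧ B.card = ℓ)).filter (fun B => P ⊆ B) with hS
    rcases S.eq_empty_or_nonempty with hSe | ⟨B0, hB0⟩
    · rw [hSe]; simp
    · simp only [hS, Finset.mem_filter, Finset.mem_powerset] at hB0
      obtain ⟨⟨hB0sub, hB0mt, hB0card⟩, hPB0⟩ := hB0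
      have hPnt : ¬ Transversal n k F P := by
        intro hPt
        have := hB0mt.2 P hPt hPB0
        have : P.card = ℓ := by rw [this, hB0card]
        omega
      have hex : ∃ A ∈ F, P ∩ A = ∅ := by
        by_contra hno
        push_neg at hno
        exact hPnt ⟨hPB0.trans hB0sub, by omega,
          fun A hA => hno A hA⟩
      obtain ⟨A, hAF, hPA⟩ := hex
      have hAcard : A.card = k := (Finset.mem_powersetCard.mp (hF hAF)).2
      have hsub : S ⊆ A.biUnion (fun x =>
          ((Finset.Icc 1 n).powerset.filter
            (fun B => MinTrans n k F B ∧ B.card = ℓ)).filter (fun B => insert x P ⊆ B)) := by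
        intro B hB
        simp only [hS, Finset.mem_filter, Finset.mem_powerset] at hB
        obtain ⟨⟨hBsub, hBmt, hBcard⟩, hPB⟩ := hB
        obtain ⟨x, hx⟩ := hBmt.1.2.2 A hAF
        rw [Finset.mem_inter] at hx
        refine Finset.mem_biUnion.mpr ⟨x, hx.2, ?_⟩
        simp only [Finset.mem_filter, Finset.mem_powerset]
        exact ⟨⟨hBsub, hBmt, hBcard⟩, Finset.insert_subset hx.1 hPB⟩
      calc S.card ≤ ∑ x ∈ A, (((Finset.Icc 1 n).powerset.filter
            (fun B => MinTrans n k F B ∧ B.card = ℓ)).filter (fun B => insert x P ⊆ B)).card :=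
            (Finset.card_le_card hsub).trans (Finset.card_biUnion_le)
        _ ≤ ∑ x ∈ A, k ^ d := by
            apply Finset.sum_le_sum
            intro x hxA
            apply ih
            have hxP : x ∉ P := fun hxP =>
              (Finset.notMem_empty x) (hPA ▸ Finset.mem_inter.mpr ⟨hxP, hxA⟩)
            rw [Finset.card_insert_of_notMem hxP]
            omega
        _ = k ^ (d + 1) := by rw [Finset.sum_const, hAcard, smul_eq_mul, pow_succ, mul_comm]

theorem stmt_11 (n k ℓ t : ℕ) (hk : 2 ≤ k) (hℓ : 2 ≤ ℓ) (hℓk : ℓ ≤ k)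
    (hn : 2 * k < n) (F : Finset (Finset ℕ))
    (hF : F ⊆ (Finset.Icc 1 n).powersetCard k) (hsat : Saturated n k F)
    (htmin : ∀ B : Finset ℕ, MinTrans n k F B → t ≤ B.card)
    (htex : ∃ B : Finset ℕ, MinTrans n k F B ∧ B.card = t)
    (ht2 : 2 ≤ t)
    (hcov : ∀ x : ℕ, ∃ B : Finset ℕ, MinTrans n k F B ∧ B.card ≤ ℓ ∧ x ∉ B) :
    {B : Finset ℕ | MinTrans n k F B ∧ B.card = ℓ}.ncard ≤ t * ℓ * k ^ (ℓ - 2) := by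
  obtain ⟨D, hDmt, hDcard⟩ := htex
  set S0 : Finset (Finset ℕ) := (Finset.Icc 1 n).powerset.filter
      (fun B => MinTrans n k F B ∧ B.card = ℓ) with hS0
  have hset : {B : Finset ℕ | MinTrans n k F B ∧ B.card = ℓ} = ↑S0 := by
    ext B
    simp only [hS0, Set.mem_setOf_eq, Finset.coe_filter, Finset.mem_powerset]
    exact ⟨fun h => ⟨h.1.1.1, h⟩, fun h => h.2⟩
  rw [hset, Set.ncard_coe_finset]
  have hsub : S0 ⊆ D.biUnion (fun x => S0.filter (fun B => x ∈ B)) := by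
    intro B hB
    have hBmt := (Finset.mem_filter.mp hB).2.1
    obtain ⟨x, hx⟩ := trans_meet n k (by omega) hn F hsat B D hBmt.1 hDmt.1
    rw [Finset.mem_inter] at hx
    exact Finset.mem_biUnion.mpr ⟨x, hx.2, Finset.mem_filter.mpr ⟨hB, hx.1⟩⟩
  have hper : ∀ x : ℕ, (S0.filter (fun B => x ∈ B)).card ≤ ℓ * k ^ (ℓ - 2) := by
    intro x
    obtain ⟨E, hEmt, hEcard, hxE⟩ := hcov x
    have hsub2 : S0.filter (fun B => x ∈ B) ⊆
        E.biUnion (fun y => S0.filter (fun B => ({x, y} : Finset ℕ) ⊆ B)) := by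
      intro B hB
      obtain ⟨hBS, hxB⟩ := Finset.mem_filter.mp hB
      have hBmt := (Finset.mem_filter.mp hBS).2.1
      obtain ⟨y, hy⟩ := trans_meet n k (by omega) hn F hsat B E hBmt.1 hEmt.1
      rw [Finset.mem_inter] at hy
      refine Finset.mem_biUnion.mpr ⟨y, hy.2, Finset.mem_filter.mpr ⟨hBS, ?_⟩⟩
      exact Finset.insert_subset hxB (Finset.singleton_subset_iff.mpr hy.1)
    calc (S0.filter (fun B => x ∈ B)).card
        ≤ ∑ y ∈ E, (S0.filter (fun B => ({x, y} : Finset ℕ) ⊆ B)).card :=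
          (Finset.card_le_card hsub2).trans Finset.card_biUnion_le
      _ ≤ ∑ y ∈ E, k ^ (ℓ - 2) := by
          apply Finset.sum_le_sum
          intro y hyE
          apply key n k ℓ hℓk F hF (ℓ - 2)
          have hxy : x ≠ y := fun h => hxE (h ▸ hyE)
          have : ({x, y} : Finset ℕ).card = 2 := by
            rw [Finset.card_insert_of_notMem (by simpa using hxy), Finset.card_singleton]
          omega
      _ ≤ ℓ * k ^ (ℓ - 2) := by
          rw [Finset.sum_const, smul_eq_mul]
          exact Nat.mul_le_mul_right _ hEcard
  calc S0.card ≤ ∑ x ∈ D, (S0.filter (fun B => x ∈ B)).card :=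
        (Finset.card_le_card hsub).trans Finset.card_biUnion_le
    _ ≤ ∑ x ∈ D, ℓ * k ^ (ℓ - 2) := Finset.sum_le_sum fun x _ => hper x
    _ = t * ℓ * k ^ (ℓ - 2) := by
        rw [Finset.sum_const, smul_eq_mul, hDcard, mul_assoc]
end

section
/- Let F be a saturated intersecting family of k-subsets of {1,...,n} with n > 2k and covering number τ(F) = k. Then |F| ≤ k^k. -/
open Finset

theorem stmt_12 (n k : ℕ) (hn : 2 * k < n) (F : Finset (Finset ℕ))
    (hF : F ⊆ (Finset.Icc 1 n).powersetCard k) (hsat : Saturated n k F)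
    (hτ : ∀ T : Finset ℕ, (∀ A ∈ F, (T ∩ A).Nonempty) → k ≤ T.card) :
    F.card ≤ k ^ k := by
  rcases Nat.eq_zero_or_pos k with hk | hk
  · subst hk
    have hFe : F = ∅ := by
      rw [Finset.eq_empty_iff_forall_notMem]
      intro A hA
      have hc : A.card = 0 := (Finset.mem_powersetCard.mp (hF hA)).2
      have h2 := hsat.1 A hA A hA
      rw [Finset.inter_self] at h2
      rw [Finset.card_eq_zero] at hc
      subst hc
      exact Finset.not_nonempty_empty h2
    simp [hFe]
  · have key : ∀ m : ℕ, ∀ S : Finset ℕ, k ≤ S.card + m →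
        (F.filter (fun A => S ⊆ A)).card ≤ k ^ m := by
      intro m
      induction m with
      | zero =>
        intro S hS
        have hsub : F.filter (fun A => S ⊆ A) ⊆ {S} := by
          intro A hA
          simp only [Finset.mem_filter] at hA
          have hcard : A.card = k := (Finset.mem_powersetCard.mp (hF hA.1)).2
          have : A = S := (Finset.eq_of_subset_of_card_le hA.2 (by omega)).symm
          simp [this]
        calc (F.filter (fun A => S ⊆ A)).card ≤ ({S} : Finset (Finset ℕ)).card :=
              Finset.card_le_card hsub
          _ = 1 := rfl
      | succ m ih =>
        intro S hS
        by_cases hSc : k ≤ S.card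
        · have hsub : F.filter (fun A => S ⊆ A) ⊆ {S} := by
            intro A hA
            simp only [Finset.mem_filter] at hA
            have hcard : A.card = k := (Finset.mem_powersetCard.mp (hF hA.1)).2
            have : A = S := (Finset.eq_of_subset_of_card_le hA.2 (by omega)).symm
            simp [this]
          calc (F.filter (fun A => S ⊆ A)).card ≤ ({S} : Finset (Finset ℕ)).card :=
                Finset.card_le_card hsub
            _ = 1 := rfl
            _ ≤ k ^ (m + 1) := Nat.one_le_pow _ _ hk
        · push_neg at hSc
          have hnt : ¬ (∀ A ∈ F, (S ∩ A).Nonempty) := fun h => absurd (hτ S h) (by omega)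
          push_neg at hnt
          obtain ⟨B, hB, hSB⟩ := hnt
          have hBcard : B.card = k := (Finset.mem_powersetCard.mp (hF hB)).2
          have hsub : F.filter (fun A => S ⊆ A) ⊆
              B.biUnion (fun x => F.filter (fun A => insert x S ⊆ A)) := by
            intro A hA
            simp only [Finset.mem_filter] at hA
            obtain ⟨x, hx⟩ := hsat.1 A hA.1 B hB
            simp only [Finset.mem_inter] at hx
            refine Finset.mem_biUnion.mpr ⟨x, hx.2, ?_⟩
            simp only [Finset.mem_filter]
            exact ⟨hA.1, Finset.insert_subset hx.1 hA.2⟩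
          calc (F.filter (fun A => S ⊆ A)).card
              ≤ _ := Finset.card_le_card hsub
            _ ≤ ∑ x ∈ B, (F.filter (fun A => insert x S ⊆ A)).card :=
                Finset.card_biUnion_le
            _ ≤ ∑ _x ∈ B, k ^ m := by
                refine Finset.sum_le_sum fun x hx => ih _ ?_
                have hxS : x ∉ S := fun hxs => by
                  have : x ∈ S ∩ B := Finset.mem_inter.mpr ⟨hxs, hx⟩
                  simp [hSB] at this
                rw [Finset.card_insert_of_notMem hxS]
                omega
            _ = B.card * k ^ m := by rw [Finset.sum_const, smul_eq_mul]
            _ ≤ k * k ^ m := by rw [hBcard]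
            _ = k ^ (m + 1) := (pow_succ' k m).symm
    have h := key k ∅ (by simp)
    calc F.card = (F.filter (fun A => ∅ ⊆ A)).card := by
          rw [Finset.filter_true_of_mem fun A _ => Finset.empty_subset A]
      _ ≤ k ^ k := h
end
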